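/- arXiv:2111.04725 — 4 statements merged into one kernel-verified Lean document; each statement's English description precedes it below -/
import Mathlib

section
/- Let G be a finite group of order N ≥ 2, let ρ be a faithful finite-dimensional complex representation of G with character χ, and let g ∈ G be a non-identity element. Then χ(1) − Re χ(g) ≥ 2 sin²(π/N). -/
open Complex Polynomial

lemma re_le_cos_of_pow_eq_one {N : ℕ} (hN : 2 ≤ N) {μ : ℂ} (hμN : μ ^ N = 1) (hμ : μ ≠ 1) :
    μ.re ≤ Real.cos (2 * Real.pi / N) := by
  have hNpos : (0:ℝ) < N := by positivity
  have habs : ‖μ‖ = 1 := by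
    have h1 : ‖μ‖ ^ N = 1 := by
      rw [← norm_pow, hμN, norm_one]
    have h0 : (0:ℝ) ≤ ‖μ‖ := norm_nonneg μ
    by_contra hne
    rcases lt_or_gt_of_ne hne with h | h
    · have := pow_lt_one₀ h0 h (by omega : N ≠ 0); rw [h1] at this; linarith
    · have := one_lt_pow₀ h (by omega : N ≠ 0); rw [h1] at this; linarith
  set θ := μ.arg with hθ
  have hμeq : μ = Complex.exp (θ * Complex.I) := by
    conv_lhs => rw [← Complex.norm_mul_exp_arg_mul_I μ]
    rw [habs]; simp; rfl
  have h1 : Complex.exp ((N * θ : ℝ) * Complex.I) = 1 := by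
    rw [← hμN, hμeq, ← Complex.exp_nat_mul]
    push_cast; ring_nf
  obtain ⟨k, hk⟩ := Complex.exp_eq_one_iff.mp h1
  have hk' : (N : ℝ) * θ = k * (2 * Real.pi) := by
    have := congrArg Complex.im hk
    simpa using this
  have hθ0 : θ ≠ 0 := by
    intro h
    apply hμ
    rw [hμeq, h]; simp
  have hk0 : k ≠ 0 := by
    rintro rfl
    apply hθ0
    have hz : (N:ℝ) * θ = 0 := by rw [hk']; push_cast; ring
    exact (mul_eq_zero.mp hz).resolve_left (ne_of_gt hNpos)
  have hkabs : (1:ℝ) ≤ |(k:ℝ)| := by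
    have h1k : (1:ℤ) ≤ |k| := Int.one_le_abs (by omega)
    calc (1:ℝ) ≤ ((|k| : ℤ) : ℝ) := by exact_mod_cast h1k
    _ = |(k:ℝ)| := by push_cast; ring
  have hθabs : 2 * Real.pi / N ≤ |θ| := by
    have hθval : |θ| = |(k:ℝ)| * (2 * Real.pi) / N := by
      have : θ = k * (2 * Real.pi) / N := by field_simp at hk' ⊢; linarith
      rw [this, abs_div, abs_mul, abs_of_pos Real.two_pi_pos, abs_of_pos hNpos]
    rw [hθval, div_le_div_iff_of_pos_right hNpos]
    nlinarith [Real.two_pi_pos]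
  have hθpi : |θ| ≤ Real.pi := Complex.abs_arg_le_pi μ
  have hre : μ.re = Real.cos θ := by
    rw [hμeq, Complex.exp_ofReal_mul_I_re]
  rw [hre, ← Real.cos_abs θ]
  exact Real.cos_le_cos_of_nonneg_of_le_pi (by positivity) hθpi hθabs

/-- A root of the characteristic polynomial of an endomorphism of a nonzero
finite-dimensional complex vector space has an eigenvector. -/
lemma exists_eigenvector_of_isRoot_charpoly
    {V : Type*} [AddCommGroup V] [Module ℂ V] [FiniteDimensional ℂ V]
    (f : Module.End ℂ V) {μ : ℂ} (h : (LinearMap.charpoly f).IsRoot μ) :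
    ∃ v : V, v ≠ 0 ∧ f v = μ • v := by
  classical
  let b := Module.finBasis ℂ V
  set M := LinearMap.toMatrix b b f with hM
  have hch : LinearMap.charpoly f = M.charpoly := (LinearMap.charpoly_toMatrix f b).symm
  have heval : (M.charpoly).eval μ = (Matrix.diagonal (fun _ => μ) - M).det := by
    rw [Matrix.charpoly, ← Polynomial.coe_evalRingHom, RingHom.map_det]
    congr 1
    ext i j
    by_cases hij : i = j <;>
      simp [Matrix.charmatrix_apply, Matrix.diagonal_apply, hij]
  have hdet0 : LinearMap.det (μ • (1 : Module.End ℂ V) - f) = 0 := by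
    rw [← LinearMap.det_toMatrix b]
    have htm : LinearMap.toMatrix b b (μ • (1 : Module.End ℂ V) - f)
        = Matrix.diagonal (fun _ => μ) - M := by
      rw [map_sub, map_smul, hM]
      congr 1
      ext i j
      by_cases hij : i = j <;>
        simp [LinearMap.toMatrix_one, Matrix.diagonal_apply, Matrix.one_apply, hij]
    rw [htm, ← heval, ← hch]
    exact h
  obtain ⟨v, hv, hv0⟩ := Submodule.exists_mem_ne_zero_of_ne_bot
    (ne_of_gt (LinearMap.bot_lt_ker_of_det_eq_zero hdet0))
  refine ⟨v, hv0, ?_⟩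
  have := LinearMap.mem_ker.mp hv
  have h2 : μ • v - f v = 0 := by simpa using this
  exact (sub_eq_zero.mp h2).symm


/-- For a faithful finite-dimensional complex representation of a finite group
`G` of order `N ≥ 2` with character `χ` and a non-identity element `g`,
`χ 1 - Re (χ g) ≥ 2 sin²(π/N)`. -/
theorem char_one_sub_re_char_ge
    {G : Type*} [Group G] [Fintype G] (hN : 2 ≤ Fintype.card G)
    {V : Type*} [AddCommGroup V] [Module ℂ V] [FiniteDimensional ℂ V]
    (ρ : Representation ℂ G V) (hfaith : Function.Injective ρ)
    (g : G) (hg : g ≠ 1) :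
    2 * Real.sin (Real.pi / (Fintype.card G : ℝ)) ^ 2 ≤
      (LinearMap.trace ℂ V (ρ 1)).re - (LinearMap.trace ℂ V (ρ g)).re := by
  classical
  set N := Fintype.card G with hNdef
  set f := ρ g with hf
  have hVnt : Nontrivial V := by
    by_contra h
    rw [not_nontrivial_iff_subsingleton] at h
    exact hg (hfaith (Subsingleton.elim _ _))
  have hfne : f ≠ 1 := fun h => hg (hfaith (by rw [map_one]; exact h))
  have hfN : f ^ N = 1 := by
    rw [hf, ← map_pow, pow_card_eq_one, map_one]
  have haev : (Polynomial.aeval f) (Polynomial.X ^ N - 1 : Polynomial ℂ) = 0 := by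
    simp [hfN]
  have hdvd : minpoly ℂ f ∣ (Polynomial.X ^ N - 1 : Polynomial ℂ) := minpoly.dvd ℂ f haev
  have hsep : (Polynomial.X ^ N - Polynomial.C 1 : Polynomial ℂ).Separable :=
    Polynomial.separable_X_pow_sub_C 1 (by exact_mod_cast (by omega : N ≠ 0)) one_ne_zero
  have hsqf : Squarefree (Polynomial.X ^ N - 1 : Polynomial ℂ) := by
    have := hsep.squarefree
    simpa using this
  have hminsqf : Squarefree (minpoly ℂ f) := hsqf.squarefree_of_dvd hdvd
  have hint : IsIntegral ℂ f := Algebra.IsIntegral.isIntegral f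
  have hdeg : 0 < (minpoly ℂ f).natDegree := minpoly.natDegree_pos hint
  -- find a root of the minimal polynomial different from 1
  obtain ⟨μ₀, hroot, hμ₀ne⟩ : ∃ μ₀, (minpoly ℂ f).IsRoot μ₀ ∧ μ₀ ≠ 1 := by
    by_contra hcon
    push_neg at hcon
    have hmon : (minpoly ℂ f).Monic := minpoly.monic hint
    have hsplit : (minpoly ℂ f).Splits := IsAlgClosed.splits _
    have hprod := hsplit.eq_prod_roots_of_monic hmon
    have hcard : (minpoly ℂ f).roots.card = (minpoly ℂ f).natDegree :=
      (Polynomial.splits_iff_card_roots).mp hsplit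
    have hallone : ∀ x ∈ (minpoly ℂ f).roots, x = 1 := fun x hx =>
      hcon x (Polynomial.isRoot_of_mem_roots hx)
    have hμmem : (1:ℂ) ∈ (minpoly ℂ f).roots := by
      have hne : (minpoly ℂ f).roots ≠ 0 := by
        intro h
        rw [h] at hcard
        simp at hcard
        omega
      obtain ⟨x, hx⟩ := Multiset.exists_mem_of_ne_zero hne
      rwa [← hallone x hx]
    have hd1 : (minpoly ℂ f).roots.card = 1 := by
      by_contra hne1
      have h2 : 2 ≤ (minpoly ℂ f).roots.card := by
        have := Multiset.card_pos_iff_exists_mem.mpr ⟨1, hμmem⟩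
        omega
      obtain ⟨s, hs⟩ := Multiset.exists_cons_of_mem hμmem
      have hs1 : s ≠ 0 := by
        intro h; rw [hs, h] at h2; simp at h2
      obtain ⟨y, hy⟩ := Multiset.exists_mem_of_ne_zero hs1
      have hy1 : y = 1 := hallone y (by rw [hs]; exact Multiset.mem_cons_of_mem hy)
      rw [hy1] at hy
      obtain ⟨t, ht⟩ := Multiset.exists_cons_of_mem hy
      have hdvd2 : (Polynomial.X - Polynomial.C 1) * (Polynomial.X - Polynomial.C 1) ∣
          minpoly ℂ f := by
        rw [hprod, hs, ht]
        simp only [Multiset.map_cons, Multiset.prod_cons]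
        refine ⟨(Multiset.map (fun x => Polynomial.X - Polynomial.C x) t).prod, by ring⟩
      exact (Polynomial.not_isUnit_X_sub_C 1) (hminsqf _ hdvd2)
    have hmin1 : minpoly ℂ f = Polynomial.X - Polynomial.C 1 := by
      rw [hprod]
      have hr : (minpoly ℂ f).roots = {1} := by
        rw [Multiset.eq_replicate_card.mpr hallone, hd1]
        rfl
      rw [hr]
      simp
    have haev1 := minpoly.aeval ℂ f
    rw [hmin1] at haev1
    simp only [map_sub, Polynomial.aeval_X, Polynomial.aeval_C] at haev1
    apply hfne
    have hsub : f - 1 = 0 := by simpa using haev1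
    linear_combination (norm := abel) hsub
  -- μ₀ is a root of the characteristic polynomial
  have hchroot : (LinearMap.charpoly f).IsRoot μ₀ :=
    hroot.dvd (LinearMap.minpoly_dvd_charpoly f)
  have hch0 : LinearMap.charpoly f ≠ 0 := (LinearMap.charpoly_monic f).ne_zero
  have hμ₀mem : μ₀ ∈ (LinearMap.charpoly f).roots :=
    (Polynomial.mem_roots hch0).mpr hchroot
  -- every root of the characteristic polynomial is an N-th root of unity
  have hrootsN : ∀ μ ∈ (LinearMap.charpoly f).roots, μ ^ N = 1 := by
    intro μ hμ
    obtain ⟨v, hv0, hfv⟩ := exists_eigenvector_of_isRoot_charpoly f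
      ((Polynomial.mem_roots hch0).mp hμ)
    have hpow : ∀ k, (f ^ k) v = μ ^ k • v := by
      intro k
      induction k with
      | zero => simp
      | succ k ih =>
        rw [pow_succ, Module.End.mul_apply, hfv, map_smul, ih, smul_smul, pow_succ, mul_comm]
    have := hpow N
    rw [hfN] at this
    simp only [Module.End.one_apply] at this
    by_contra hne
    have : (μ ^ N - 1) • v = 0 := by
      rw [sub_smul, one_smul, ← this, sub_self]
    rcases smul_eq_zero.mp this with h | h
    · exact hne (by linear_combination h)
    · exact hv0 h
  -- trace computations
  let b := Module.finBasis ℂ V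
  set R := (LinearMap.charpoly f).roots with hR
  have htr : LinearMap.trace ℂ V f = R.sum := by
    rw [LinearMap.trace_eq_matrix_trace ℂ b, Matrix.trace_eq_sum_roots_charpoly, hR,
      LinearMap.charpoly_toMatrix f b]
  have hcardR : Multiset.card R = Module.finrank ℂ V := by
    rw [hR, Polynomial.splits_iff_card_roots.mp (IsAlgClosed.splits _),
      LinearMap.charpoly_natDegree]
  have htr1 : LinearMap.trace ℂ V (ρ 1) = (Module.finrank ℂ V : ℂ) := by
    rw [map_one]
    exact LinearMap.trace_one ℂ V
  -- split off μ₀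
  obtain ⟨R', hR'⟩ := Multiset.exists_cons_of_mem hμ₀mem
  have hsum : (LinearMap.trace ℂ V f).re = μ₀.re + (R'.map Complex.re).sum := by
    rw [htr, hR', Multiset.sum_cons]
    simp only [Complex.add_re]
    congr 1
    exact map_multiset_sum Complex.reAddGroupHom R' ▸ rfl
  have hcard' : Module.finrank ℂ V = Multiset.card R' + 1 := by
    rw [← hcardR, hR', Multiset.card_cons]
  -- each root ≠ μ₀ contributes re ≤ 1
  have hre_le : (R'.map Complex.re).sum ≤ (Multiset.card R' : ℝ) := by
    have hbound : ∀ x ∈ R'.map Complex.re, x ≤ 1 := by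
      intro x hx
      obtain ⟨μ, hμmem', rfl⟩ := Multiset.mem_map.mp hx
      have hμR : μ ∈ R := by rw [hR']; exact Multiset.mem_cons_of_mem hμmem'
      have hμN : μ ^ N = 1 := hrootsN μ hμR
      have habs : ‖μ‖ = 1 := by
        have h1 : ‖μ‖ ^ N = 1 := by rw [← norm_pow, hμN, norm_one]
        have h0 : (0:ℝ) ≤ ‖μ‖ := norm_nonneg μ
        by_contra hne
        rcases lt_or_gt_of_ne hne with h | h
        · have := pow_lt_one₀ h0 h (by omega : N ≠ 0); rw [h1] at this; linarith
        · have := one_lt_pow₀ h (by omega : N ≠ 0); rw [h1] at this; linarith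
      calc μ.re ≤ ‖μ‖ := Complex.re_le_norm μ
      _ = 1 := habs
    calc (R'.map Complex.re).sum ≤ Multiset.card (R'.map Complex.re) • (1:ℝ) :=
          Multiset.sum_le_card_nsmul _ 1 hbound
    _ = (Multiset.card R' : ℝ) := by rw [Multiset.card_map]; simp
  -- the key bound on μ₀
  have hμ₀N : μ₀ ^ N = 1 := hrootsN μ₀ hμ₀mem
  have hμ₀re : μ₀.re ≤ Real.cos (2 * Real.pi / N) := re_le_cos_of_pow_eq_one hN hμ₀N hμ₀ne
  -- trig identity
  have htrig : 1 - Real.cos (2 * Real.pi / N) = 2 * Real.sin (Real.pi / N) ^ 2 := by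
    have h2 : 2 * Real.pi / N = 2 * (Real.pi / N) := by ring
    rw [h2, Real.cos_two_mul]
    have := Real.sin_sq_add_cos_sq (Real.pi / N)
    nlinarith
  -- put it together
  rw [htr1]
  simp only [Complex.natCast_re]
  rw [hsum, hcard']
  push_cast
  linarith
end

section
/- Let G be a finite group of order N ≥ 2, let ρ be a faithful finite-dimensional complex representation of G with character χ, let g ∈ G be a non-identity element, and let d ≥ 2 be an integer. Then the series Σ_{n=1}^∞ Re χ(gⁿ)/nᵈ converges absolutely and satisfies Σ_{n=1}^∞ Re χ(gⁿ)/nᵈ ≤ ζ(d) χ(1) − 2 sin²(π/N), where ζ(d) = Σ_{n=1}^∞ n^{−d}. -/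
open Polynomial Matrix Complex

lemma aux_charpoly_eval_aux {m : ℕ} (A : Matrix (Fin m) (Fin m) ℂ) (μ : ℂ) :
    A.charpoly.eval μ = (μ • (1 : Matrix (Fin m) (Fin m) ℂ) - A).det := by
  have h : A.charpoly.eval μ = ((evalRingHom μ).mapMatrix (charmatrix A)).det := by
    rw [Matrix.charpoly, ← RingHom.map_det]; rfl
  rw [h]
  congr 1
  ext i j
  by_cases h' : i = j
  · subst h'; simp [charmatrix_apply_eq]
  · simp [charmatrix_apply_ne _ _ _ h', Matrix.one_apply_ne h']

lemma aux_pow_eq_one_of_isRoot {m N : ℕ} {A : Matrix (Fin m) (Fin m) ℂ}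
    (hA : A ^ N = 1) {μ : ℂ} (hroot : A.charpoly.IsRoot μ) : μ ^ N = 1 := by
  have hdet : (μ • (1 : Matrix (Fin m) (Fin m) ℂ) - A).det = 0 := by
    rw [← aux_charpoly_eval_aux]; exact hroot
  obtain ⟨v, hv0, hv⟩ := (Matrix.exists_mulVec_eq_zero_iff).mpr hdet
  have hAv : A.mulVec v = μ • v := by
    have := hv
    rw [Matrix.sub_mulVec, Matrix.smul_mulVec, Matrix.one_mulVec, sub_eq_zero] at this
    exact this.symm
  have hpow : ∀ k : ℕ, (A ^ k).mulVec v = μ ^ k • v := by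
    intro k
    induction k with
    | zero => simp
    | succ k ih =>
      rw [pow_succ', ← Matrix.mulVec_mulVec, ih, Matrix.mulVec_smul, hAv,
        pow_succ', smul_smul]
      ring_nf
  have h1 : v = μ ^ N • v := by rw [← hpow N, hA, Matrix.one_mulVec]
  have h2 : (μ ^ N - 1) • v = 0 := by rw [sub_smul, one_smul, ← h1, sub_self]
  rcases smul_eq_zero.mp h2 with h | h
  · exact sub_eq_zero.mp h
  · exact absurd h hv0


lemma aux_exists_root_ne_one {m N : ℕ} (hN : N ≠ 0) {A : Matrix (Fin m) (Fin m) ℂ}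
    (hA : A ^ N = 1) (hA1 : A ≠ 1) : ∃ μ ∈ A.charpoly.roots, μ ≠ 1 := by
  rcases Nat.eq_zero_or_pos m with hm | hm
  · subst hm; exact absurd (Subsingleton.elim A 1) hA1
  haveI : Nonempty (Fin m) := ⟨⟨0, hm⟩⟩
  haveI : Nontrivial (Matrix (Fin m) (Fin m) ℂ) := Matrix.nonempty
  have hint : IsIntegral ℂ A := Algebra.IsIntegral.isIntegral A
  set p := minpoly ℂ A with hp
  have hp0 : p ≠ 0 := minpoly.ne_zero hint
  have hpmonic : p.Monic := minpoly.monic hint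
  have haev : aeval A ((X : ℂ[X]) ^ N - 1) = 0 := by
    rw [map_sub, map_pow, aeval_X, _root_.map_one, hA, sub_self]
  have hdvd : p ∣ (X : ℂ[X]) ^ N - 1 := minpoly.dvd ℂ A haev
  have hXN0 : ((X : ℂ[X]) ^ N - 1) ≠ 0 := by
    have : ((X : ℂ[X]) ^ N - C 1).Monic := monic_X_pow_sub_C (1 : ℂ) hN
    simpa using this.ne_zero
  have hsq : Squarefree ((X : ℂ[X]) ^ N - 1) :=
    (X_pow_sub_one_separable_iff.mpr (by exact_mod_cast Nat.cast_ne_zero.mpr hN)).squarefree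
  have hpne : p ≠ X - 1 := by
    intro h
    have h2 := minpoly.aeval ℂ A
    rw [← hp, h, map_sub, aeval_X, _root_.map_one, sub_eq_zero] at h2
    exact hA1 h2
  have key : ∃ μ, p.IsRoot μ ∧ μ ≠ 1 := by
    by_cases hd1 : (X - 1 : ℂ[X]) ∣ p
    · obtain ⟨r, hr⟩ := hd1
      have hr0 : r ≠ 0 := by rintro rfl; simp at hr; exact hp0 hr
      have hrdeg : 0 < r.degree := by
        rcases lt_or_ge 0 r.degree with h | h
        · exact h
        · exfalso
          have hm1 : (X - 1 : ℂ[X]).Monic := by simpa using monic_X_sub_C (1 : ℂ)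
          have hrmonic : r.Monic := hm1.of_mul_monic_left (hr ▸ hpmonic)
          have hre : r = C (r.coeff 0) := eq_C_of_degree_le_zero h
          have hc : r.coeff 0 = 1 := by
            have h2 := hrmonic
            rw [hre, Monic, leadingCoeff_C] at h2
            exact h2
          rw [hre, hc, C_1, mul_one] at hr
          exact hpne hr
      obtain ⟨μ, hμ⟩ := Complex.exists_root hrdeg
      refine ⟨μ, ?_, ?_⟩
      · rw [hr]; simp [IsRoot, hμ.eq_zero]
      · rintro rfl
        have hdvd2 : (X - 1 : ℂ[X]) * (X - 1) ∣ (X : ℂ[X]) ^ N - 1 := by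
          have : (X - 1 : ℂ[X]) ∣ r := by
            have := (dvd_iff_isRoot (p := r) (a := (1:ℂ))).mpr hμ
            simpa using this
          obtain ⟨s, hs⟩ := this
          exact Dvd.dvd.trans ⟨s, by rw [hr, hs]; ring⟩ hdvd
        have := hsq (X - 1) hdvd2
        exact (Polynomial.not_isUnit_X_sub_C (1:ℂ)) this
    · have hdeg : 0 < p.degree := minpoly.degree_pos hint
      obtain ⟨μ, hμ⟩ := Complex.exists_root hdeg
      refine ⟨μ, hμ, ?_⟩
      rintro rfl
      exact hd1 (by simpa using (dvd_iff_isRoot (p := p) (a := (1:ℂ))).mpr hμ)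
  obtain ⟨μ, hroot, hne⟩ := key
  have hmem : μ ∈ p.roots := by rw [mem_roots hp0]; exact hroot
  have hchar0 : A.charpoly ≠ 0 := (Matrix.charpoly_monic A).ne_zero
  have hle : p.roots ≤ A.charpoly.roots :=
    Polynomial.roots.le_of_dvd hchar0 (Matrix.minpoly_dvd_charpoly A)
  exact ⟨μ, Multiset.mem_of_le hle hmem, hne⟩


lemma aux_re_le_of_pow_eq_one {N : ℕ} (hN : 2 ≤ N) {μ : ℂ} (hμ : μ ^ N = 1) (hne : μ ≠ 1) :
    μ.re ≤ 1 - 2 * Real.sin (Real.pi / N) ^ 2 := by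
  have hN0 : N ≠ 0 := by omega
  haveI : NeZero N := ⟨hN0⟩
  obtain ⟨k, hk, hek⟩ := (Complex.isPrimitiveRoot_exp N hN0).eq_pow_of_pow_eq_one hμ
  have hk0 : k ≠ 0 := by
    rintro rfl
    rw [pow_zero] at hek
    exact hne hek.symm
  have hkey : μ = Complex.exp ((2 * Real.pi * k / N : ℝ) * I) := by
    rw [← hek, ← Complex.exp_nat_mul]
    congr 1
    push_cast
    ring
  have hre : μ.re = Real.cos (2 * Real.pi * k / N) := by
    rw [hkey, Complex.exp_ofReal_mul_I_re]
  set θ : ℝ := 2 * Real.pi * k / N with hθ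
  have hNpos : (0 : ℝ) < N := by positivity
  have hπ := Real.pi_pos
  have hk1 : (1 : ℝ) ≤ k := by exact_mod_cast Nat.one_le_iff_ne_zero.mpr hk0
  have hkN : (k : ℝ) ≤ N - 1 := by
    have : k + 1 ≤ N := hk
    have : ((k + 1 : ℕ) : ℝ) ≤ N := by exact_mod_cast this
    push_cast at this
    linarith
  have e1 : θ * N = 2 * Real.pi * k := by
    rw [hθ]; field_simp
  have hlow : 2 * Real.pi / N ≤ θ := by
    rw [div_le_iff₀ hNpos, e1]
    nlinarith
  have hhigh : θ ≤ 2 * Real.pi - 2 * Real.pi / N := by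
    rw [hθ, div_le_iff₀ hNpos]
    have e2 : (2 * Real.pi - 2 * Real.pi / N) * N = 2 * Real.pi * N - 2 * Real.pi := by
      field_simp
    rw [e2]
    nlinarith
  have hcos : Real.cos θ ≤ Real.cos (2 * Real.pi / N) := by
    rcases le_or_gt θ Real.pi with hθπ | hθπ
    · exact Real.cos_le_cos_of_nonneg_of_le_pi (by positivity) hθπ hlow
    · have h1 : Real.cos θ = Real.cos (2 * Real.pi - θ) := (Real.cos_two_pi_sub θ).symm
      rw [h1]
      apply Real.cos_le_cos_of_nonneg_of_le_pi (by positivity)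
      · linarith
      · linarith
  have hcos2 : Real.cos (2 * Real.pi / N) = 1 - 2 * Real.sin (Real.pi / N) ^ 2 := by
    have h1 : 2 * Real.pi / N = 2 * (Real.pi / N) := by ring
    rw [h1, Real.cos_two_mul]
    have h2 := Real.sin_sq_add_cos_sq (Real.pi / N)
    nlinarith
  rw [hre]
  linarith [hcos, hcos2.symm.le]



lemma aux_abs_of_root {N : ℕ} (hN : N ≠ 0) {μ : ℂ} (hμ : μ ^ N = 1) : ‖μ‖ = 1 := by
  have h1 : ‖μ‖₊ ^ N = 1 := by rw [← nnnorm_pow, hμ, nnnorm_one]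
  have h2 : ‖μ‖₊ = 1 := (pow_eq_one_iff_left hN).mp h1
  rw [← coe_nnnorm, h2, NNReal.coe_one]

lemma aux_trace_re_eq {m : ℕ} (A : Matrix (Fin m) (Fin m) ℂ) :
    A.trace.re = ((A.charpoly.roots).map Complex.re).sum := by
  rw [Matrix.trace_eq_sum_roots_charpoly, ← Complex.coe_reAddGroupHom,
    map_multiset_sum]

lemma aux_roots_card {m : ℕ} (A : Matrix (Fin m) (Fin m) ℂ) :
    Multiset.card A.charpoly.roots = m := by
  rw [(Polynomial.splits_iff_card_roots).mp (IsAlgClosed.splits A.charpoly),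
    Matrix.charpoly_natDegree_eq_dim, Fintype.card_fin]

lemma aux_root_re_le {m N : ℕ} (hN : N ≠ 0) {A : Matrix (Fin m) (Fin m) ℂ} (hA : A ^ N = 1)
    {μ : ℂ} (hμ : μ ∈ A.charpoly.roots) : |μ.re| ≤ 1 := by
  have hroot := (Polynomial.mem_roots'.mp hμ).2
  have h1 : μ ^ N = 1 := aux_pow_eq_one_of_isRoot hA hroot
  calc |μ.re| ≤ ‖μ‖ := Complex.abs_re_le_norm μ
    _ = 1 := by exact aux_abs_of_root hN h1

lemma aux_trace_re_abs_le {m N : ℕ} (hN : N ≠ 0) {A : Matrix (Fin m) (Fin m) ℂ}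
    (hA : A ^ N = 1) : |A.trace.re| ≤ m := by
  rw [abs_le, aux_trace_re_eq]
  constructor
  · have h := Multiset.card_nsmul_le_sum (s := (A.charpoly.roots).map Complex.re) (a := (-1 : ℝ))
      (by intro x hx
          obtain ⟨μ, hμ, rfl⟩ := Multiset.mem_map.mp hx
          linarith [abs_le.mp (aux_root_re_le hN hA hμ)] )
    rw [Multiset.card_map, aux_roots_card] at h
    simpa using h
  · have h := Multiset.sum_le_card_nsmul ((A.charpoly.roots).map Complex.re) 1
      (by intro x hx
          obtain ⟨μ, hμ, rfl⟩ := Multiset.mem_map.mp hx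
          linarith [abs_le.mp (aux_root_re_le hN hA hμ)] )
    rw [Multiset.card_map, aux_roots_card] at h
    simpa using h

lemma aux_trace_re_le_sub {m N : ℕ} (hN : 2 ≤ N) {A : Matrix (Fin m) (Fin m) ℂ}
    (hA : A ^ N = 1) (hA1 : A ≠ 1) :
    A.trace.re ≤ m - 2 * Real.sin (Real.pi / N) ^ 2 := by
  have hN0 : N ≠ 0 := by omega
  obtain ⟨μ, hμmem, hμne⟩ := aux_exists_root_ne_one hN0 hA hA1
  obtain ⟨t, ht⟩ := Multiset.exists_cons_of_mem hμmem
  have hμN : μ ^ N = 1 := aux_pow_eq_one_of_isRoot hA (Polynomial.mem_roots'.mp hμmem).2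
  have hcard : (Multiset.card t : ℝ) = m - 1 := by
    have h1 : Multiset.card t + 1 = m := by
      have := aux_roots_card A
      rw [ht, Multiset.card_cons] at this
      omega
    have : ((Multiset.card t + 1 : ℕ) : ℝ) = m := by exact_mod_cast h1
    push_cast at this
    linarith
  have hμre : μ.re ≤ 1 - 2 * Real.sin (Real.pi / N) ^ 2 := aux_re_le_of_pow_eq_one hN hμN hμne
  have htsum : (t.map Complex.re).sum ≤ (Multiset.card t : ℝ) := by
    have h := Multiset.sum_le_card_nsmul (t.map Complex.re) 1
      (by intro x hx
          obtain ⟨ν, hν, rfl⟩ := Multiset.mem_map.mp hx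
          have hν' : ν ∈ A.charpoly.roots := by rw [ht]; exact Multiset.mem_cons_of_mem hν
          linarith [abs_le.mp (aux_root_re_le hN0 hA hν')] )
    rw [Multiset.card_map] at h
    simpa using h
  rw [aux_trace_re_eq, ht, Multiset.map_cons, Multiset.sum_cons]
  linarith



/-- For a faithful finite-dimensional complex representation of a finite group
`G` of order `N ≥ 2` with character `χ`, a non-identity `g ∈ G` and an integer `d ≥ 2`, the
series `Σ_{n≥1} Re χ(gⁿ)/nᵈ` converges absolutely and is at most
`ζ(d) χ(1) - 2 sin²(π/N)`, where `ζ(d) = Σ_{n≥1} n⁻ᵈ`. -/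
theorem re_char_sum_le
    {G : Type*} [Group G] [Fintype G] (hN : 2 ≤ Fintype.card G)
    {V : Type*} [AddCommGroup V] [Module ℂ V] [FiniteDimensional ℂ V]
    (ρ : Representation ℂ G V) (hfaith : Function.Injective ρ)
    (g : G) (hg : g ≠ 1) (d : ℕ) (hd : 2 ≤ d) :
    Summable (fun n : ℕ =>
      |(LinearMap.trace ℂ V (ρ (g ^ (n + 1)))).re| / ((n : ℝ) + 1) ^ d) ∧
    ∑' n : ℕ, (LinearMap.trace ℂ V (ρ (g ^ (n + 1)))).re / ((n : ℝ) + 1) ^ d ≤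
      (∑' n : ℕ, 1 / ((n : ℝ) + 1) ^ d) * (LinearMap.trace ℂ V (ρ 1)).re -
        2 * Real.sin (Real.pi / (Fintype.card G : ℝ)) ^ 2 := by
  set N := Fintype.card G with hNdef
  set D := Module.finrank ℂ V with hDdef
  have hN0 : N ≠ 0 := by omega
  let b : Module.Basis (Fin D) ℂ V := Module.finBasis ℂ V
  set M : G → Matrix (Fin D) (Fin D) ℂ := fun h => LinearMap.toMatrix b b (ρ h) with hM
  have hMeq : ∀ h : G, M h = LinearMap.toMatrixAlgEquiv b (ρ h) := fun h => rfl
  have hpow : ∀ h : G, (M h) ^ N = 1 := by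
    intro h
    rw [hMeq, ← map_pow, ← map_pow, pow_card_eq_one, _root_.map_one, _root_.map_one]
  have htr : ∀ h : G, (LinearMap.trace ℂ V (ρ h)).re = (M h).trace.re := by
    intro h
    rw [LinearMap.trace_eq_matrix_trace ℂ b]
  -- trace at identity
  have htr1 : (LinearMap.trace ℂ V (ρ 1)).re = (D : ℝ) := by
    rw [_root_.map_one, LinearMap.trace_one]
    simp
    rfl
  -- uniform bound
  have hbound : ∀ n : ℕ, |(LinearMap.trace ℂ V (ρ (g ^ (n + 1)))).re| ≤ (D : ℝ) := by
    intro n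
    rw [htr]
    exact aux_trace_re_abs_le hN0 (hpow _)
  -- first-term bound
  have hfirst : (LinearMap.trace ℂ V (ρ g)).re ≤
      (D : ℝ) - 2 * Real.sin (Real.pi / N) ^ 2 := by
    rw [htr]
    apply aux_trace_re_le_sub hN (hpow g)
    intro hMg
    apply hg
    apply hfaith
    rw [_root_.map_one]
    apply (LinearMap.toMatrix b b).injective
    rw [show (LinearMap.toMatrix b b) (ρ g) = M g from rfl, hMg, LinearMap.toMatrix_one]
  -- summability
  have hs : Summable (fun n : ℕ => 1 / ((n : ℝ) + 1) ^ d) := by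
    have h0 : Summable (fun n : ℕ => 1 / (n : ℝ) ^ d) :=
      Real.summable_one_div_nat_pow.mpr (by omega)
    have h1 := (summable_nat_add_iff 1).mpr h0
    refine h1.congr fun n => ?_
    push_cast
    ring
  have hc : Summable (fun n : ℕ => (D : ℝ) / ((n : ℝ) + 1) ^ d) := by
    refine (hs.mul_left (D : ℝ)).congr fun n => ?_
    ring
  have habs : Summable (fun n : ℕ =>
      |(LinearMap.trace ℂ V (ρ (g ^ (n + 1)))).re| / ((n : ℝ) + 1) ^ d) := by
    refine Summable.of_nonneg_of_le (fun n => by positivity) (fun n => ?_) hc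
    gcongr
    exact hbound n
  refine ⟨habs, ?_⟩
  set a : ℕ → ℝ := fun n => (LinearMap.trace ℂ V (ρ (g ^ (n + 1)))).re / ((n : ℝ) + 1) ^ d
    with ha_def
  have ha : Summable a := by
    refine Summable.of_abs (habs.congr fun n => ?_)
    rw [ha_def, abs_div, abs_of_pos (by positivity : (0:ℝ) < ((n : ℝ) + 1) ^ d)]
  set c : ℕ → ℝ := fun n => (D : ℝ) / ((n : ℝ) + 1) ^ d with hc_def
  have hsucc_le : ∀ n : ℕ, a (n + 1) ≤ c (n + 1) := by
    intro n
    rw [ha_def, hc_def]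
    dsimp only
    gcongr
    exact (le_abs_self _).trans (hbound (n + 1))
  have hsum_succ_le : (∑' n : ℕ, a (n + 1)) ≤ ∑' n : ℕ, c (n + 1) :=
    ((summable_nat_add_iff 1).mpr ha).tsum_le_tsum hsucc_le
      ((summable_nat_add_iff 1).mpr hc)
  have ha0 : a 0 ≤ c 0 - 2 * Real.sin (Real.pi / N) ^ 2 := by
    rw [ha_def, hc_def]
    dsimp only
    push_cast
    rw [zero_add, one_pow, div_one, div_one, pow_one]
    exact hfirst
  have hca : (∑' n : ℕ, a n) ≤ (∑' n : ℕ, c n) - 2 * Real.sin (Real.pi / N) ^ 2 := by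
    rw [ha.tsum_eq_zero_add, hc.tsum_eq_zero_add]
    linarith
  have hceq : (∑' n : ℕ, c n) = (∑' n : ℕ, 1 / ((n : ℝ) + 1) ^ d) * (D : ℝ) := by
    rw [← tsum_mul_right]
    congr 1
    funext n
    rw [hc_def]
    ring
  rw [htr1]
  calc (∑' n : ℕ, a n) ≤ (∑' n : ℕ, c n) - 2 * Real.sin (Real.pi / N) ^ 2 := hca
    _ = (∑' n : ℕ, 1 / ((n : ℝ) + 1) ^ d) * (D : ℝ) - 2 * Real.sin (Real.pi / N) ^ 2 := by
        rw [hceq]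
end

section
/- Let G be a finite group, χ the character of a finite-dimensional complex representation of G, and d ≥ 3 an integer; set Δ = (d−2)/2. For β > 0 and g ∈ G, the series L(β,g) = Σ_{n=1}^∞ (e^{−nβΔ}/n) (χ(gⁿ) + conj(χ(gⁿ))) (1 − e^{−2nβ})/(1 − e^{−nβ})ᵈ converges absolutely, and lim_{β→0⁺} β^{d−1} L(β,g) = 4 Σ_{n=1}^∞ Re χ(gⁿ)/nᵈ, where the series on the right converges absolutely. -/
/-- The `n`-th term (indexing `n : ℕ` corresponds to `n + 1 ≥ 1`) of the series defining the
logarithm `L(β, g)` of the twisted partition function of a free scalar on `S^{d-1} × S¹_β`: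
`(e^{-nβΔ}/n) (χ(gⁿ) + conj χ(gⁿ)) (1 - e^{-2nβ})/(1 - e^{-nβ})ᵈ` with `Δ = (d-2)/2`. -/
noncomputable def freeScalarLogTerm {G : Type*} [Group G] (χ : G → ℂ) (d : ℕ)
    (β : ℝ) (g : G) (n : ℕ) : ℂ :=
  ((Real.exp (-(((n : ℝ) + 1) * β * (((d : ℝ) - 2) / 2))) / ((n : ℝ) + 1) : ℝ) : ℂ) *
    (χ (g ^ (n + 1)) + star (χ (g ^ (n + 1)))) *
    (((1 - Real.exp (-(2 * ((n : ℝ) + 1) * β))) /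
        (1 - Real.exp (-(((n : ℝ) + 1) * β))) ^ d : ℝ) : ℂ)

/-- `L(β, g) = Σ_{n=1}^∞ (e^{-nβΔ}/n) (χ(gⁿ) + conj χ(gⁿ)) (1 - e^{-2nβ})/(1 - e^{-nβ})ᵈ`. -/
noncomputable def freeScalarLog {G : Type*} [Group G] (χ : G → ℂ) (d : ℕ)
    (β : ℝ) (g : G) : ℂ :=
  ∑' n : ℕ, freeScalarLogTerm χ d β g n

open Real Filter Nat

private lemma pow_le_fact_mul_exp (k : ℕ) {t : ℝ} (ht : 0 ≤ t) :
    t ^ k ≤ k ! * Real.exp t := by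
  have h2 : t ^ k / k ! ≤ ∑ i ∈ Finset.range (k + 1), t ^ i / i ! :=
    Finset.single_le_sum (f := fun i => t ^ i / i !) (fun i _ => by positivity)
      (Finset.self_mem_range_succ k)
  have h := h2.trans (Real.sum_le_exp_of_nonneg ht (k + 1))
  have hk : (0:ℝ) < k ! := by positivity
  rw [div_le_iff₀ hk] at h
  linarith [h]

private lemma exp_decay_bound (k : ℕ) {x D : ℝ} (hx : 0 ≤ x) (hD : 1 / 2 ≤ D) :
    Real.exp (-(D * x)) * (1 + x) ^ k ≤ 2 ^ k * (1 + k ! * 2 ^ k) := by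
  have hmono : Real.exp (-(D * x)) ≤ Real.exp (-(x / 2)) := by
    apply Real.exp_le_exp.mpr; nlinarith
  have hpk : (0:ℝ) ≤ (1 + x) ^ k := by positivity
  refine (mul_le_mul_of_nonneg_right hmono hpk).trans ?_
  have hkpos : (0:ℝ) < k ! := by positivity
  rcases le_total x 1 with h1 | h1
  · have hb : (1 + x) ^ k ≤ 2 ^ k := pow_le_pow_left₀ (by linarith) (by linarith) k
    have he : Real.exp (-(x / 2)) ≤ 1 := Real.exp_le_one_iff.mpr (by linarith)
    have h2k : (0:ℝ) < 2 ^ k := by positivity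
    calc Real.exp (-(x / 2)) * (1 + x) ^ k ≤ 1 * 2 ^ k :=
          mul_le_mul he hb hpk zero_le_one
      _ ≤ 2 ^ k * (1 + ↑k ! * 2 ^ k) := by nlinarith [mul_pos h2k (mul_pos hkpos h2k)]
  · have hb : (1 + x) ^ k ≤ (2 * x) ^ k := pow_le_pow_left₀ (by linarith) (by linarith) k
    have key : Real.exp (-(x / 2)) * (x / 2) ^ k ≤ k ! := by
      rw [Real.exp_neg]
      rw [inv_mul_le_iff₀ (Real.exp_pos _)]
      calc (x / 2) ^ k ≤ k ! * Real.exp (x / 2) := pow_le_fact_mul_exp k (by linarith)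
        _ = Real.exp (x / 2) * k ! := mul_comm _ _
    have hrw : (2 * x) ^ k = 2 ^ k * 2 ^ k * (x / 2) ^ k := by
      rw [← mul_pow, ← mul_pow]; congr 1; ring
    have h2k : (0:ℝ) < 2 ^ k := by positivity
    calc Real.exp (-(x / 2)) * (1 + x) ^ k
        ≤ Real.exp (-(x / 2)) * (2 * x) ^ k :=
          mul_le_mul_of_nonneg_left hb (Real.exp_pos _).le
      _ = 2 ^ k * 2 ^ k * (Real.exp (-(x / 2)) * (x / 2) ^ k) := by rw [hrw]; ring
      _ ≤ 2 ^ k * 2 ^ k * k ! := by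
          apply mul_le_mul_of_nonneg_left key (by positivity)
      _ ≤ 2 ^ k * (1 + k ! * 2 ^ k) := by nlinarith

private lemma main_term_bound {d : ℕ} (hd : 3 ≤ d) {β m : ℝ} (hβ : 0 < β) (hm : 1 ≤ m) :
    β ^ (d - 1) * (Real.exp (-(m * β * (((d : ℝ) - 2) / 2))) *
      ((1 - Real.exp (-(2 * m * β))) / (1 - Real.exp (-(m * β))) ^ d)) ≤
    2 ^ d * (1 + (d - 1)! * 2 ^ (d - 1)) / m ^ (d - 1) := by
  obtain ⟨k, rfl⟩ : ∃ k, d = k + 1 := ⟨d - 1, by omega⟩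
  simp only [Nat.add_sub_cancel] at *
  push_cast
  have hm0 : 0 < m := by linarith
  set x : ℝ := m * β with hxdef
  have hx : 0 < x := by positivity
  have hD : 0 < 1 - Real.exp (-x) := by
    have : Real.exp (-x) < 1 := Real.exp_lt_one_iff.mpr (by linarith)
    linarith
  set D : ℝ := 1 - Real.exp (-x) with hDdef
  set Δ : ℝ := ((k : ℝ) + 1 - 2) / 2 with hΔdef
  set B : ℝ := 2 ^ k * (1 + (k ! : ℝ) * 2 ^ k) with hBdef
  have hB0 : 0 < B := by positivity
  have hΔ : (1:ℝ) / 2 ≤ Δ := by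
    have : (2:ℝ) ≤ (k:ℝ) := by exact_mod_cast (by omega : 2 ≤ k)
    rw [hΔdef]; linarith
  have harg : m * β * (((k:ℝ) + 1 - 2) / 2) = Δ * x := by rw [hxdef, hΔdef]; ring
  rw [harg]
  have h2x : -(2 * m * β) = -x + -x := by rw [hxdef]; ring
  have h1e : Real.exp (-x) ≤ 1 := by linarith
  have h0e : 0 < Real.exp (-x) := Real.exp_pos _
  have hnum : 1 - Real.exp (-(2 * m * β)) ≤ 2 * D := by
    rw [h2x, Real.exp_add]; nlinarith
  have hnum0 : 0 ≤ 1 - Real.exp (-(2 * m * β)) := by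
    rw [h2x, Real.exp_add]; nlinarith
  have hDlow : x / (1 + x) ≤ D := by
    have h1 : 1 + x ≤ Real.exp x := by linarith [Real.add_one_le_exp x]
    have h2 : Real.exp (-x) ≤ 1 / (1 + x) := by
      rw [Real.exp_neg, inv_eq_one_div]
      exact one_div_le_one_div_of_le (by positivity) h1
    have h3 : x / (1 + x) + 1 / (1 + x) = 1 := by
      field_simp
      ring
    rw [hDdef]; linarith
  set N : ℝ := 1 - Real.exp (-(2 * m * β)) with hNdef
  have step1 : β ^ k * (Real.exp (-(Δ * x)) * (N / D ^ (k + 1))) =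
      (β ^ k * Real.exp (-(Δ * x)) * N) / D ^ (k + 1) := by ring
  rw [step1, div_le_div_iff₀ (by positivity) (by positivity)]
  -- goal : β ^ k * exp * N * m ^ k ≤ (2^(k+1) * (1 + k! * 2^k)) * D^(k+1)
  have hX : β ^ k * m ^ k = x ^ k := by rw [hxdef, mul_pow]; ring
  have hB := exp_decay_bound k hx.le hΔ
  have hfrac : x ^ k * Real.exp (-(Δ * x)) ≤ B * D ^ k := by
    have hp1 : (x / (1 + x)) ^ k ≤ D ^ k := pow_le_pow_left₀ (by positivity) hDlow k
    have hp2 : x ^ k * Real.exp (-(Δ * x)) =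
        (x / (1 + x)) ^ k * (Real.exp (-(Δ * x)) * (1 + x) ^ k) := by
      rw [div_pow]
      field_simp
    rw [hp2]
    calc (x / (1 + x)) ^ k * (Real.exp (-(Δ * x)) * (1 + x) ^ k)
        ≤ D ^ k * B := mul_le_mul hp1 hB (by positivity) (by positivity)
      _ = B * D ^ k := mul_comm _ _
  calc β ^ k * Real.exp (-(Δ * x)) * N * m ^ k
      = x ^ k * Real.exp (-(Δ * x)) * N := by rw [← hX]; ring
    _ ≤ x ^ k * Real.exp (-(Δ * x)) * (2 * D) := by
        have h0 : 0 ≤ x ^ k * Real.exp (-(Δ * x)) := by positivity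
        nlinarith
    _ ≤ (B * D ^ k) * (2 * D) := by
        have hDD : (0:ℝ) ≤ 2 * D := by linarith
        exact mul_le_mul_of_nonneg_right hfrac hDD
    _ = 2 ^ (k + 1) * (1 + (k ! : ℝ) * 2 ^ k) * D ^ (k + 1) := by
        rw [hBdef]; ring

/-- The real form of the series term. -/
private noncomputable def rT (d : ℕ) (r mR β : ℝ) : ℝ :=
  Real.exp (-(mR * β * (((d : ℝ) - 2) / 2))) / mR * (2 * r) *
    ((1 - Real.exp (-(2 * mR * β))) / (1 - Real.exp (-(mR * β))) ^ d)

private lemma rT_bound {d : ℕ} (hd : 3 ≤ d) {β mR C r : ℝ} (hβ : 0 < β) (hm : 1 ≤ mR)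
    (hr : |r| ≤ C) :
    β ^ (d - 1) * |rT d r mR β| ≤
      2 * C * (2 ^ d * (1 + (d - 1)! * 2 ^ (d - 1))) / mR ^ d := by
  have hm0 : 0 < mR := by linarith
  have hC0 : 0 ≤ C := (abs_nonneg r).trans hr
  have hD : 0 < 1 - Real.exp (-(mR * β)) := by
    have : Real.exp (-(mR * β)) < 1 := Real.exp_lt_one_iff.mpr (by nlinarith)
    linarith
  have hN : 0 ≤ 1 - Real.exp (-(2 * mR * β)) := by
    have : Real.exp (-(2 * mR * β)) ≤ 1 := Real.exp_le_one_iff.mpr (by nlinarith)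
    linarith
  have habs : |rT d r mR β| =
      Real.exp (-(mR * β * (((d : ℝ) - 2) / 2))) / mR * (2 * |r|) *
        ((1 - Real.exp (-(2 * mR * β))) / (1 - Real.exp (-(mR * β))) ^ d) := by
    unfold rT
    rw [abs_mul, abs_mul]
    rw [abs_of_nonneg (by positivity : (0:ℝ) ≤
      Real.exp (-(mR * β * (((d : ℝ) - 2) / 2))) / mR)]
    rw [abs_of_nonneg (by positivity : (0:ℝ) ≤
      (1 - Real.exp (-(2 * mR * β))) / (1 - Real.exp (-(mR * β))) ^ d)]
    rw [abs_mul, abs_of_nonneg (by norm_num : (0:ℝ) ≤ (2:ℝ))]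
  have hmain := main_term_bound hd hβ hm
  have hdk : mR ^ d = mR ^ (d - 1) * mR := by
    rw [← pow_succ]
    congr 1
    omega
  calc β ^ (d - 1) * |rT d r mR β|
      = (2 * |r| / mR) * (β ^ (d - 1) * (Real.exp (-(mR * β * (((d : ℝ) - 2) / 2))) *
          ((1 - Real.exp (-(2 * mR * β))) / (1 - Real.exp (-(mR * β))) ^ d))) := by
        rw [habs]; ring
    _ ≤ (2 * C / mR) * (2 ^ d * (1 + (d - 1)! * 2 ^ (d - 1)) / mR ^ (d - 1)) := by
        refine mul_le_mul (by gcongr) hmain ?_ (by positivity)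
        have h1 : 0 ≤ β ^ (d-1) := by positivity
        have h2 : 0 ≤ Real.exp (-(mR * β * (((d : ℝ) - 2) / 2))) := (Real.exp_pos _).le
        positivity
    _ = 2 * C * (2 ^ d * (1 + (d - 1)! * 2 ^ (d - 1))) / mR ^ d := by
        rw [hdk]
        field_simp

private lemma slope_tendsto (c : ℝ) :
    Tendsto (fun β : ℝ => (1 - Real.exp (-(c * β))) / β) (nhdsWithin 0 (Set.Ioi 0)) (nhds c) := by
  have h1 : HasDerivAt (fun β : ℝ => 1 - Real.exp (-(c * β))) c 0 := by
    have h0 : HasDerivAt (fun β : ℝ => -(c * β)) (-c) 0 := by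
      simpa [Pi.neg_def] using ((hasDerivAt_id (0:ℝ)).const_mul c).neg
    have := (h0.exp).const_sub 1
    simpa using this
  have h2 := hasDerivAt_iff_tendsto_slope.mp h1
  have h3 : Tendsto (slope (fun β : ℝ => 1 - Real.exp (-(c * β))) 0)
      (nhdsWithin 0 (Set.Ioi 0)) (nhds c) :=
    h2.mono_left (nhdsWithin_mono _ (fun y hy => by
      simpa using (ne_of_gt (Set.mem_Ioi.mp hy))))
  refine h3.congr fun β => ?_
  simp [slope_def_field, Real.exp_zero]

private lemma term_tendsto {d : ℕ} (hd : 3 ≤ d) (r : ℝ) {m : ℝ} (hm : 0 < m) :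
    Tendsto (fun β : ℝ => β ^ (d - 1) * rT d r m β)
      (nhdsWithin 0 (Set.Ioi 0)) (nhds (4 * r / m ^ d)) := by
  unfold rT
  obtain ⟨k, rfl⟩ : ∃ k, d = k + 1 := ⟨d - 1, by omega⟩
  simp only [Nat.add_sub_cancel] at *
  have T1 : Tendsto (fun β : ℝ => Real.exp (-(m * β * ((((k:ℕ)+1 : ℝ)) - 2) / 2)))
      (nhdsWithin 0 (Set.Ioi 0)) (nhds 1) := by
    have : Continuous (fun β : ℝ => Real.exp (-(m * β * ((((k:ℕ)+1 : ℝ)) - 2) / 2))) := by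
      continuity
    have h := this.tendsto' 0 1 (by simp)
    exact h.mono_left nhdsWithin_le_nhds
  have T2 : Tendsto (fun β : ℝ => (1 - Real.exp (-(2 * m * β))) / β)
      (nhdsWithin 0 (Set.Ioi 0)) (nhds (2 * m)) := by
    have := slope_tendsto (2 * m)
    refine this.congr fun β => by ring_nf
  have T3 : Tendsto (fun β : ℝ => ((1 - Real.exp (-(m * β))) / β)⁻¹)
      (nhdsWithin 0 (Set.Ioi 0)) (nhds m⁻¹) :=
    (slope_tendsto m).inv₀ hm.ne'
  have T4 : Tendsto (fun β : ℝ =>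
      Real.exp (-(m * β * ((((k:ℕ)+1 : ℝ)) - 2) / 2)) / m * (2 * r) *
        (((1 - Real.exp (-(2 * m * β))) / β) * (((1 - Real.exp (-(m * β))) / β)⁻¹) ^ (k+1)))
      (nhdsWithin 0 (Set.Ioi 0))
      (nhds ((1 : ℝ) / m * (2 * r) * (2 * m * (m⁻¹) ^ (k+1)))) := by
    exact ((T1.div_const m).mul_const (2 * r)).mul (T2.mul (T3.pow (k+1)))
  have hval : (1 : ℝ) / m * (2 * r) * (2 * m * (m⁻¹) ^ (k+1)) = 4 * r / m ^ (k+1) := by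
    rw [inv_pow]
    field_simp
    ring
  rw [hval] at T4
  apply T4.congr'
  filter_upwards [self_mem_nhdsWithin] with β hβ
  have hβ0 : 0 < β := Set.mem_Ioi.mp hβ
  have hDm : 0 < 1 - Real.exp (-(m * β)) := by
    have : Real.exp (-(m * β)) < 1 := Real.exp_lt_one_iff.mpr (by nlinarith)
    linarith
  have hpow : β ^ k * β = β ^ (k + 1) := by rw [pow_succ]
  rw [inv_pow, div_pow]
  field_simp
  push_cast
  ring_nf



/-- For the character `χ` of a finite-dimensional complex representation of a
finite group `G`, an integer `d ≥ 3`, and `g ∈ G`, the series defining `L(β, g)` converges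
absolutely for every `β > 0`, and `β^{d-1} L(β, g) → 4 Σ_{n≥1} Re χ(gⁿ)/nᵈ` as `β → 0⁺`,
the latter series converging absolutely. -/
theorem freeScalarLog_asymptotics
    {G : Type*} [Group G] [Fintype G]
    {V : Type*} [AddCommGroup V] [Module ℂ V] [FiniteDimensional ℂ V]
    (ρ : Representation ℂ G V) (d : ℕ) (hd : 3 ≤ d) (g : G) :
    (∀ β : ℝ, 0 < β →
      Summable (fun n : ℕ =>
        ‖freeScalarLogTerm (fun h => LinearMap.trace ℂ V (ρ h)) d β g n‖)) ∧
    Summable (fun n : ℕ =>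
      |(LinearMap.trace ℂ V (ρ (g ^ (n + 1)))).re| / ((n : ℝ) + 1) ^ d) ∧
    Filter.Tendsto
      (fun β : ℝ => (β : ℂ) ^ (d - 1) *
        freeScalarLog (fun h => LinearMap.trace ℂ V (ρ h)) d β g)
      (nhdsWithin 0 (Set.Ioi 0))
      (nhds (4 * ∑' n : ℕ,
        (((LinearMap.trace ℂ V (ρ (g ^ (n + 1)))).re / ((n : ℝ) + 1) ^ d : ℝ) : ℂ))) := by
  -- notation
  set χ : G → ℂ := fun h => LinearMap.trace ℂ V (ρ h) with hχdef
  set r : ℕ → ℝ := fun n => (χ (g ^ (n + 1))).re with hrdef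
  -- the term as a real number
  have hterm : ∀ (β : ℝ) (n : ℕ),
      freeScalarLogTerm χ d β g n = ((rT d (r n) ((n : ℝ) + 1) β : ℝ) : ℂ) := by
    intro β n
    unfold freeScalarLogTerm rT
    rw [show (χ (g ^ (n + 1)) + star (χ (g ^ (n + 1)))) =
        ((2 * (χ (g ^ (n + 1))).re : ℝ) : ℂ) from by
      rw [Complex.star_def, Complex.add_conj]]
    push_cast
    ring
  -- uniform bound on the character
  set C : ℝ := ∑ h : G, ‖χ h‖ with hCdef
  have hrC : ∀ n, |r n| ≤ C := by
    intro n
    refine (Complex.abs_re_le_norm _).trans ?_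
    exact Finset.single_le_sum (f := fun h => ‖χ h‖)
      (fun h _ => norm_nonneg _) (Finset.mem_univ (g ^ (n + 1)))
  have hC0 : 0 ≤ C := (abs_nonneg _).trans (hrC 0)
  set K : ℝ := 2 * C * (2 ^ d * (1 + (d - 1)! * 2 ^ (d - 1))) with hKdef
  have hK0 : 0 ≤ K := by positivity
  -- summability of 1/(n+1)^d
  have hsum1 : Summable (fun n : ℕ => 1 / ((n : ℝ) + 1) ^ d) := by
    have h1 : Summable (fun n : ℕ => 1 / ((n : ℝ)) ^ d) :=
      Real.summable_one_div_nat_pow.mpr (by omega)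
    have h2 := (summable_nat_add_iff 1).mpr h1
    exact h2.congr fun n => by push_cast; ring
  have hsumK : Summable (fun n : ℕ => K / ((n : ℝ) + 1) ^ d) :=
    (hsum1.mul_left K).congr fun n => by rw [mul_one_div]
  -- the uniform bound on terms
  have hbnd : ∀ {β : ℝ}, 0 < β → ∀ n : ℕ,
      β ^ (d - 1) * |rT d (r n) ((n : ℝ) + 1) β| ≤ K / ((n : ℝ) + 1) ^ d := by
    intro β hβ n
    exact rT_bound hd hβ (by push_cast; linarith [Nat.cast_nonneg (α := ℝ) n]) (hrC n)
  refine ⟨?_, ?_, ?_⟩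
  · -- summability of the series for each β > 0
    intro β hβ
    have hβp : 0 < β ^ (d - 1) := by positivity
    refine Summable.of_nonneg_of_le (fun n => norm_nonneg _)
      (fun n => ?_) (hsumK.div_const (β ^ (d - 1)))
    rw [hterm β n, Complex.norm_real, Real.norm_eq_abs, le_div_iff₀ hβp]
    calc |rT d (r n) ((n : ℝ) + 1) β| * β ^ (d - 1)
        = β ^ (d - 1) * |rT d (r n) ((n : ℝ) + 1) β| := mul_comm _ _
      _ ≤ K / ((n : ℝ) + 1) ^ d := hbnd hβ n
  · -- summability of the limit series
    refine Summable.of_nonneg_of_le (fun n => by positivity) (fun n => ?_)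
      ((hsum1.mul_left C).congr fun n => by rw [mul_one_div])
    have hp : (0:ℝ) < ((n : ℝ) + 1) ^ d := by positivity
    exact div_le_div_of_nonneg_right (hrC n) hp.le
  · -- the limit
    have hlim : Tendsto (fun β : ℝ => ∑' n : ℕ, β ^ (d - 1) * rT d (r n) ((n : ℝ) + 1) β)
        (nhdsWithin 0 (Set.Ioi 0))
        (nhds (∑' n : ℕ, 4 * r n / ((n : ℝ) + 1) ^ d)) := by
      apply tendsto_tsum_of_dominated_convergence hsumK
      · intro n
        exact term_tendsto hd (r n) (by positivity)
      · filter_upwards [self_mem_nhdsWithin] with β hβ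
        intro n
        have hβ0 : 0 < β := Set.mem_Ioi.mp hβ
        have := hbnd hβ0 n
        calc ‖β ^ (d - 1) * rT d (r n) ((n : ℝ) + 1) β‖
            = β ^ (d - 1) * |rT d (r n) ((n : ℝ) + 1) β| := by
              rw [Real.norm_eq_abs, abs_mul, abs_of_nonneg (by positivity : (0:ℝ) ≤ β ^ (d-1))]
          _ ≤ K / ((n : ℝ) + 1) ^ d := this
    have hlim2 := hlim.ofReal
    have heqfun : ∀ β : ℝ, ((∑' n : ℕ, β ^ (d - 1) * rT d (r n) ((n : ℝ) + 1) β : ℝ) : ℂ) =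
        (β : ℂ) ^ (d - 1) * freeScalarLog χ d β g := by
      intro β
      rw [tsum_mul_left, Complex.ofReal_mul, Complex.ofReal_pow]
      congr 1
      rw [freeScalarLog, Complex.ofReal_tsum]
      exact tsum_congr fun n => (hterm β n).symm
    have heqlim : ((∑' n : ℕ, 4 * r n / ((n : ℝ) + 1) ^ d : ℝ) : ℂ) =
        4 * ∑' n : ℕ, ((r n / ((n : ℝ) + 1) ^ d : ℝ) : ℂ) := by
      have : (fun n : ℕ => 4 * r n / ((n : ℝ) + 1) ^ d) =
          fun n : ℕ => 4 * (r n / ((n : ℝ) + 1) ^ d) := by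
        funext n; ring
      rw [this, tsum_mul_left, Complex.ofReal_mul, Complex.ofReal_tsum]
      norm_num
    rw [heqlim] at hlim2
    exact hlim2.congr heqfun
end

section
/- Let G be a finite group, χ the character of a faithful finite-dimensional complex representation of G, and d ≥ 3 an integer; set Δ = (d−2)/2 and for β > 0, g ∈ G define Z(β,g) = exp(Σ_{n=1}^∞ (e^{−nβΔ}/n) (χ(gⁿ) + conj(χ(gⁿ))) (1 − e^{−2nβ})/(1 − e^{−nβ})ᵈ). For an irreducible complex representation α of G with character χ_α, define the reduced partition function Z_α(β) = (dim α/|G|) Σ_{g∈G} conj(χ_α(g)) Z(β,g). Then lim_{β→0⁺} Z_α(β)/Z(β,1) = dim(α)²/|G|, where 1 is the identity of G. -/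
/-- The twisted partition function `Z(β, g) = exp L(β, g)`. -/
noncomputable def freeScalarZ {G : Type*} [Group G] (χ : G → ℂ) (d : ℕ)
    (β : ℝ) (g : G) : ℂ :=
  Complex.exp (∑' n : ℕ, freeScalarLogTerm χ d β g n)

open Polynomial in
lemma root_pow_eq_one {N m : ℕ} (hm : 0 < m) (M : Matrix (Fin N) (Fin N) ℂ) (hM : M ^ m = 1)
    {lam : ℂ} (hlam : lam ∈ M.charpoly.roots) : lam ^ m = 1 := by
  rw [Polynomial.mem_roots (M.charpoly_monic.ne_zero)] at hlam
  have heval : M.charpoly.eval lam = (lam • (1 : Matrix (Fin N) (Fin N) ℂ) - M).det := by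
    rw [Matrix.charpoly, ← Polynomial.coe_evalRingHom, RingHom.map_det]
    congr 1
    ext i j
    by_cases h : i = j <;>
      simp [h, Matrix.charmatrix_apply, Matrix.map_apply, Matrix.one_apply, Matrix.diagonal_apply]
  have hdet : (lam • (1 : Matrix (Fin N) (Fin N) ℂ) - M).det = 0 := by
    rw [← heval]; exact hlam
  obtain ⟨v, hv, hveq⟩ := (Matrix.exists_mulVec_eq_zero_iff).mpr hdet
  have hMv : M.mulVec v = lam • v := by
    have := congrArg (fun w => w + M.mulVec v) hveq
    simpa [Matrix.sub_mulVec, Matrix.smul_mulVec, Matrix.one_mulVec] using this.symm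
  have hpow : ∀ k : ℕ, (M ^ k).mulVec v = lam ^ k • v := by
    intro k
    induction k with
    | zero => simp [Matrix.one_mulVec]
    | succ k ih =>
      rw [pow_succ, ← Matrix.mulVec_mulVec, hMv]
      simp [Matrix.mulVec_smul, ih, smul_smul, pow_succ, mul_comm]
  have hvm := hpow m
  rw [hM, Matrix.one_mulVec] at hvm
  obtain ⟨i, hi⟩ := Function.ne_iff.mp hv
  simp only [ne_eq] at hi
  have h2 : (1 : ℂ) * v i = lam ^ m * v i := by
    simpa using congrFun hvm i
  simpa using (mul_right_cancel₀ hi h2).symm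

open Polynomial in
lemma trace_re_le {N m : ℕ} (hm : 0 < m) (M : Matrix (Fin N) (Fin N) ℂ)
    (hroots : ∀ lam ∈ M.charpoly.roots, lam ^ m = 1) :
    |M.trace.re| ≤ N ∧ (M.trace.re = N → ∀ lam ∈ M.charpoly.roots, lam = 1) := by
  have hsplits := IsAlgClosed.splits (k := ℂ) M.charpoly
  have hcard : M.charpoly.roots.card = N := by
    rw [(Polynomial.splits_iff_card_roots).mp hsplits, Matrix.charpoly_natDegree_eq_dim,
      Fintype.card_fin]
  have htr : M.trace = M.charpoly.roots.sum := Matrix.trace_eq_sum_roots_charpoly M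
  have habs : ∀ lam ∈ M.charpoly.roots, ‖lam‖ = 1 := by
    intro lam hlam
    have h1 : ‖lam‖ ^ m = 1 ^ m := by
      rw [← norm_pow, hroots lam hlam, norm_one, one_pow]
    exact (pow_left_inj₀ (norm_nonneg lam) zero_le_one hm.ne').mp h1
  have hre : ∀ lam ∈ M.charpoly.roots, |lam.re| ≤ 1 := by
    intro lam hlam
    calc |lam.re| ≤ ‖lam‖ := Complex.abs_re_le_norm lam
    _ = 1 := habs lam hlam
  have hsumre : M.trace.re = (M.charpoly.roots.map Complex.re).sum := by
    rw [htr]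
    exact map_multiset_sum Complex.reAddGroupHom M.charpoly.roots
  constructor
  · rw [hsumre]
    calc |(M.charpoly.roots.map Complex.re).sum|
        ≤ ((M.charpoly.roots.map Complex.re).map abs).sum := by
          exact Multiset.abs_sum_le_sum_abs
    _ ≤ ((M.charpoly.roots.map Complex.re).map abs).card • (1:ℝ) := by
          apply Multiset.sum_le_card_nsmul
          intro x hx
          simp only [Multiset.mem_map] at hx
          obtain ⟨lam, hlam, rfl⟩ := hx
          obtain ⟨lam', hlam', rfl⟩ := hlam
          exact hre lam' hlam'
    _ = N := by simp [hcard]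
  · intro heq lam hlam
    have hsum0 : ((M.charpoly.roots.map (fun l => 1 - l.re)).sum : ℝ) = 0 := by
      rw [Multiset.sum_map_sub]
      simp only [Multiset.map_const', Multiset.sum_replicate, smul_eq_mul, mul_one]
      rw [hcard, ← hsumre, heq]
      ring
    have hz : ∀ x ∈ M.charpoly.roots.map (fun l => 1 - l.re), x = 0 := by
      intro x hx
      by_contra hne
      have hpos : 0 < x := by
        simp only [Multiset.mem_map] at hx
        obtain ⟨l, hl, rfl⟩ := hx
        have := hre l hl
        cases lt_or_eq_of_le (abs_le.mp this).2 with
        | inl h => linarith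
        | inr h => exact absurd (by linarith) hne
      have hle : x ≤ (M.charpoly.roots.map (fun l => 1 - l.re)).sum := by
        apply Multiset.single_le_sum _ _ hx
        intro y hy
        simp only [Multiset.mem_map] at hy
        obtain ⟨l, hl, rfl⟩ := hy
        have := (abs_le.mp (hre l hl)).2
        linarith
      rw [hsum0] at hle
      linarith
    have hre1 : lam.re = 1 := by
      have := hz (1 - lam.re) (Multiset.mem_map_of_mem _ hlam)
      linarith
    have h1 := habs lam hlam
    have him : lam.im = 0 := by
      have := Complex.sq_norm lam
      rw [h1, Complex.normSq_apply, hre1] at this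
      nlinarith
    exact Complex.ext hre1 him

open Polynomial in
lemma matrix_eq_one_of_roots_one {N m : ℕ} (hm : 0 < m) (M : Matrix (Fin N) (Fin N) ℂ)
    (hM : M ^ m = 1) (hroots : ∀ lam ∈ M.charpoly.roots, lam = 1) : M = 1 := by
  rcases Nat.eq_zero_or_pos N with hN | hN
  · subst hN; exact Subsingleton.elim _ _
  have hsplits := IsAlgClosed.splits (k := ℂ) M.charpoly
  have hcard : M.charpoly.roots.card = N := by
    rw [(Polynomial.splits_iff_card_roots).mp hsplits, Matrix.charpoly_natDegree_eq_dim,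
      Fintype.card_fin]
  have hchar : M.charpoly = (X - C 1) ^ N := by
    have := hsplits.eq_prod_roots_of_monic M.charpoly_monic
    rw [this]
    have : M.charpoly.roots.map (fun a => X - C a) =
        Multiset.replicate N ((X : ℂ[X]) - C 1) := by
      rw [Multiset.eq_replicate]
      constructor
      · simp [hcard]
      · intro b hb
        simp only [Multiset.mem_map] at hb
        obtain ⟨a, ha, rfl⟩ := hb
        rw [hroots a ha]
    rw [this, Multiset.prod_replicate]
  have hCH : (M - 1) ^ N = 0 := by
    simpa [hchar] using M.aeval_self_charpoly
  have hdvd1 : minpoly ℂ M ∣ (X - C 1) ^ N := by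
    apply minpoly.dvd
    simpa using hCH
  have hdvd2 : minpoly ℂ M ∣ X ^ m - 1 := by
    apply minpoly.dvd
    simp [hM]
  have hsqfree : Squarefree (minpoly ℂ M) := by
    apply Squarefree.squarefree_of_dvd hdvd2
    exact (Polynomial.X_pow_sub_one_separable_iff.mpr (Nat.cast_ne_zero.mpr hm.ne')).squarefree
  have hdvd : minpoly ℂ M ∣ X - C 1 :=
    (hsqfree.dvd_pow_iff_dvd hN.ne').mp hdvd1
  obtain ⟨q, hq⟩ := hdvd
  have : Polynomial.aeval M ((X : ℂ[X]) - C 1) = 0 := by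
    rw [hq, map_mul, minpoly.aeval, zero_mul]
  simp only [map_sub, aeval_X, aeval_C, map_one] at this
  rw [sub_eq_zero] at this
  simpa using this

lemma end_trace_re {V : Type*} [AddCommGroup V] [Module ℂ V] [FiniteDimensional ℂ V]
    {m : ℕ} (hm : 0 < m) (f : Module.End ℂ V) (hf : f ^ m = 1) :
    |(LinearMap.trace ℂ V f).re| ≤ Module.finrank ℂ V ∧
      ((LinearMap.trace ℂ V f).re = Module.finrank ℂ V → f = 1) := by
  set b := Module.finBasis ℂ V
  set e := LinearMap.toMatrixAlgEquiv b with he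
  set M := e f with hMdef
  have hM : M ^ m = 1 := by rw [hMdef, ← map_pow, hf, map_one]
  have htr : LinearMap.trace ℂ V f = M.trace := by
    rw [LinearMap.trace_eq_matrix_trace ℂ b f]; rfl
  have hroots : ∀ lam ∈ M.charpoly.roots, lam ^ m = 1 :=
    fun lam hlam => root_pow_eq_one hm M hM hlam
  obtain ⟨h1, h2⟩ := trace_re_le hm M hroots
  refine ⟨by rwa [htr], fun heq => ?_⟩
  have : M = 1 := matrix_eq_one_of_roots_one hm M hM (h2 (by rwa [htr] at heq))
  have : e f = e 1 := by rw [map_one, ← this, hMdef]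
  exact e.injective this



noncomputable def fsRealTerm {G : Type*} [Group G] (χ : G → ℂ) (d : ℕ)
    (β : ℝ) (g : G) (n : ℕ) : ℝ :=
  Real.exp (-(((n : ℝ) + 1) * β * (((d : ℝ) - 2) / 2))) / ((n : ℝ) + 1) *
    (2 * (χ (g ^ (n + 1))).re) *
    ((1 - Real.exp (-(2 * ((n : ℝ) + 1) * β))) / (1 - Real.exp (-(((n : ℝ) + 1) * β))) ^ d)

lemma fsLogTerm_eq {G : Type*} [Group G] (χ : G → ℂ) (d : ℕ) (β : ℝ) (g : G) (n : ℕ) :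
    freeScalarLogTerm χ d β g n = ((fsRealTerm χ d β g n : ℝ) : ℂ) := by
  unfold freeScalarLogTerm fsRealTerm
  rw [show (star (χ (g ^ (n + 1))) : ℂ) = (starRingEnd ℂ) (χ (g ^ (n + 1))) from rfl,
    Complex.add_conj]
  push_cast
  ring

lemma fsZ_eq {G : Type*} [Group G] (χ : G → ℂ) (d : ℕ) (β : ℝ) (g : G) :
    freeScalarZ χ d β g = ((Real.exp (∑' n, fsRealTerm χ d β g n) : ℝ) : ℂ) := by
  rw [freeScalarZ, Complex.ofReal_exp, Complex.ofReal_tsum]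
  congr 1
  exact tsum_congr fun n => fsLogTerm_eq χ d β g n

open Real in
lemma aux_abs_le {β : ℝ} (hβ : 0 < β) (d n : ℕ) (b c : ℝ) {B : ℝ} (hb : |b| ≤ 2 * B) :
    |Real.exp (-(((n : ℝ) + 1) * β * c)) / ((n : ℝ) + 1) * b *
      ((1 - Real.exp (-(2 * ((n : ℝ) + 1) * β))) /
        (1 - Real.exp (-(((n : ℝ) + 1) * β))) ^ d)| ≤
    (Real.exp (-(β * c)) * (2 * B) / (1 - Real.exp (-β)) ^ d) * Real.exp (-(β * c)) ^ n := by
  have hx1 : Real.exp (-β) < 1 := exp_lt_one_iff.mpr (by linarith)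
  have hden0 : 0 < 1 - Real.exp (-β) := by linarith
  have hnb : (0:ℝ) < (n:ℝ) + 1 := by positivity
  have hxn1 : Real.exp (-(((n:ℝ)+1) * β)) < 1 := exp_lt_one_iff.mpr (by nlinarith)
  have hxn2 : Real.exp (-(2 * ((n:ℝ)+1) * β)) < 1 := exp_lt_one_iff.mpr (by nlinarith)
  have hdenn : 1 - Real.exp (-β) ≤ 1 - Real.exp (-(((n:ℝ)+1) * β)) := by
    have : Real.exp (-(((n:ℝ)+1) * β)) ≤ Real.exp (-β) := exp_le_exp.mpr (by nlinarith)
    linarith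
  have ha : (0:ℝ) ≤ Real.exp (-(((n : ℝ) + 1) * β * c)) / ((n : ℝ) + 1) := by positivity
  have hr0 : (0:ℝ) ≤ (1 - Real.exp (-(2 * ((n : ℝ) + 1) * β))) /
      (1 - Real.exp (-(((n : ℝ) + 1) * β))) ^ d := by
    exact div_nonneg (by linarith) (pow_nonneg (by linarith) d)
  have hB0 : (0:ℝ) ≤ 2 * B := le_trans (abs_nonneg b) hb
  rw [abs_mul, abs_mul, abs_of_nonneg ha, abs_of_nonneg hr0]
  have h1 : Real.exp (-(((n : ℝ) + 1) * β * c)) / ((n : ℝ) + 1)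
      ≤ Real.exp (-(β * c)) ^ (n + 1) := by
    calc Real.exp (-(((n : ℝ) + 1) * β * c)) / ((n : ℝ) + 1)
        ≤ Real.exp (-(((n : ℝ) + 1) * β * c)) := by
          apply div_le_self (exp_nonneg _) (by simp)
      _ = Real.exp (-(β * c)) ^ (n + 1) := by
          rw [← Real.exp_nat_mul]
          congr 1
          push_cast
          ring
  have h3 : (1 - Real.exp (-(2 * ((n : ℝ) + 1) * β))) /
      (1 - Real.exp (-(((n : ℝ) + 1) * β))) ^ d ≤ 1 / (1 - Real.exp (-β)) ^ d := by
    apply div_le_div₀ (by norm_num)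
      (by have := Real.exp_pos (-(2 * ((n:ℝ)+1) * β)); linarith) (pow_pos hden0 d)
    exact pow_le_pow_left₀ hden0.le hdenn d
  calc Real.exp (-(((n : ℝ) + 1) * β * c)) / ((n : ℝ) + 1) * |b| *
      ((1 - Real.exp (-(2 * ((n : ℝ) + 1) * β))) / (1 - Real.exp (-(((n : ℝ) + 1) * β))) ^ d)
      ≤ Real.exp (-(β * c)) ^ (n + 1) * (2 * B) * (1 / (1 - Real.exp (-β)) ^ d) := by
        apply mul_le_mul (mul_le_mul h1 hb (abs_nonneg b) (by positivity)) h3 hr0 (by positivity)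
    _ = (Real.exp (-(β * c)) * (2 * B) / (1 - Real.exp (-β)) ^ d) * Real.exp (-(β * c)) ^ n := by
        rw [pow_succ]
        field_simp

lemma fsRealTerm_summable {G : Type*} [Group G] (χ : G → ℂ) (d : ℕ) (hd : 3 ≤ d) {β : ℝ}
    (hβ : 0 < β) (g : G) {B : ℝ} (hB : ∀ h, |(χ h).re| ≤ B) :
    Summable (fsRealTerm χ d β g) := by
  have hc0 : 0 < ((d:ℝ) - 2) / 2 := by
    have : (3:ℝ) ≤ d := by exact_mod_cast hd
    linarith
  have hq0 : (0:ℝ) ≤ Real.exp (-(β * (((d:ℝ) - 2) / 2))) := (Real.exp_pos _).le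
  have hq1 : Real.exp (-(β * (((d:ℝ) - 2) / 2))) < 1 :=
    Real.exp_lt_one_iff.mpr (by nlinarith)
  apply Summable.of_abs
  apply Summable.of_nonneg_of_le (fun n => abs_nonneg _)
    (fun n => aux_abs_le hβ d n _ _ (by
      rw [abs_mul]
      have := hB (g ^ (n + 1))
      rw [show |(2:ℝ)| = 2 by norm_num]
      linarith))
    ((summable_geometric_of_lt_one hq0 hq1).mul_left _)

lemma fsT_diff_le {G : Type*} [Group G] (χ : G → ℂ) (d : ℕ) (hd : 3 ≤ d) {β : ℝ}
    (hβ : 0 < β) (g : G) {B N : ℝ} (hB : ∀ h, |(χ h).re| ≤ B) (hχ1 : (χ 1).re = N)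
    (hle : ∀ h, (χ h).re ≤ N) :
    (∑' n, fsRealTerm χ d β g n) - (∑' n, fsRealTerm χ d β 1 n) ≤
      Real.exp (-(β * (((d:ℝ) - 2) / 2))) * (2 * ((χ g).re - N)) *
        ((1 - Real.exp (-(2 * β))) / (1 - Real.exp (-β)) ^ d) := by
  have hSg := fsRealTerm_summable χ d hd hβ g hB
  have hS1 := fsRealTerm_summable χ d hd hβ 1 hB
  rw [← hSg.tsum_sub hS1]
  have htermeq : ∀ n, fsRealTerm χ d β g n - fsRealTerm χ d β 1 n =
      Real.exp (-(((n : ℝ) + 1) * β * (((d:ℝ) - 2) / 2))) / ((n : ℝ) + 1) *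
        (2 * ((χ (g ^ (n + 1))).re - N)) *
        ((1 - Real.exp (-(2 * ((n : ℝ) + 1) * β))) /
          (1 - Real.exp (-(((n : ℝ) + 1) * β))) ^ d) := by
    intro n
    simp only [fsRealTerm, one_pow, hχ1]
    ring
  set D := fun n => fsRealTerm χ d β g n - fsRealTerm χ d β 1 n with hD
  have hDsum : Summable D := hSg.sub hS1
  have hterm_nonpos : ∀ n, D n ≤ 0 := by
    intro n
    show fsRealTerm χ d β g n - fsRealTerm χ d β 1 n ≤ 0
    rw [htermeq n]
    have hx1 : Real.exp (-(((n:ℝ)+1) * β)) < 1 :=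
      Real.exp_lt_one_iff.mpr (by nlinarith [Nat.cast_nonneg (α := ℝ) n])
    have hx2 : Real.exp (-(2 * ((n:ℝ)+1) * β)) < 1 :=
      Real.exp_lt_one_iff.mpr (by nlinarith [Nat.cast_nonneg (α := ℝ) n])
    have hr0 : (0:ℝ) ≤ (1 - Real.exp (-(2 * ((n : ℝ) + 1) * β))) /
        (1 - Real.exp (-(((n : ℝ) + 1) * β))) ^ d :=
      div_nonneg (by linarith) (pow_nonneg (by linarith) d)
    have ha : (0:ℝ) ≤ Real.exp (-(((n : ℝ) + 1) * β * (((d:ℝ) - 2) / 2))) / ((n : ℝ) + 1) := by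
      positivity
    have hmid : 2 * ((χ (g ^ (n + 1))).re - N) ≤ 0 := by
      have := hle (g ^ (n + 1))
      linarith
    exact mul_nonpos_of_nonpos_of_nonneg (mul_nonpos_of_nonneg_of_nonpos ha hmid) hr0
  calc ∑' n, D n = D 0 + ∑' n, D (n + 1) := hDsum.tsum_eq_zero_add
    _ ≤ D 0 + 0 := by
        gcongr
        exact tsum_nonpos fun n => hterm_nonpos (n + 1)
    _ = Real.exp (-(β * (((d:ℝ) - 2) / 2))) * (2 * ((χ g).re - N)) *
        ((1 - Real.exp (-(2 * β))) / (1 - Real.exp (-β)) ^ d) := by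
        show fsRealTerm χ d β g 0 - fsRealTerm χ d β 1 0 + 0 = _
        rw [add_zero, htermeq 0]
        norm_num

open Filter Real Set

lemma tendsto_ratio_atTop (d : ℕ) (hd : 3 ≤ d) :
    Tendsto (fun β : ℝ => Real.exp (-(β * (((d:ℝ) - 2) / 2))) *
        ((1 - Real.exp (-(2 * β))) / (1 - Real.exp (-β)) ^ d))
      (nhdsWithin 0 (Set.Ioi 0)) Filter.atTop := by
  have hcong : ∀ β ∈ Set.Ioi (0:ℝ),
      Real.exp (-(β * (((d:ℝ) - 2) / 2))) *
        ((1 - Real.exp (-(2 * β))) / (1 - Real.exp (-β)) ^ d) =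
      (Real.exp (-(β * (((d:ℝ) - 2) / 2))) * (1 + Real.exp (-β))) *
        ((1 - Real.exp (-β)) ^ (d - 1))⁻¹ := by
    intro β hβ
    have hβ0 : (0:ℝ) < β := hβ
    have hx1 : Real.exp (-β) < 1 := Real.exp_lt_one_iff.mpr (by linarith)
    have hne : 1 - Real.exp (-β) ≠ 0 := by linarith
    have h2 : Real.exp (-(2 * β)) = Real.exp (-β) ^ 2 := by
      rw [sq, ← Real.exp_add]; ring_nf
    have hpow : (1 - Real.exp (-β)) ^ d = (1 - Real.exp (-β)) ^ (d - 1) * (1 - Real.exp (-β)) := by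
      rw [← pow_succ]
      congr 1
      omega
    rw [h2, hpow]
    have hnum : 1 - Real.exp (-β) ^ 2 = (1 - Real.exp (-β)) * (1 + Real.exp (-β)) := by ring
    rw [hnum]
    field_simp
  apply Filter.Tendsto.congr' (Filter.eventuallyEq_of_mem self_mem_nhdsWithin
    fun β hβ => (hcong β hβ).symm)
  have hexp : Tendsto (fun β : ℝ => Real.exp (-β)) (nhdsWithin 0 (Set.Ioi 0)) (nhds 1) := by
    have h1 : Tendsto (fun β : ℝ => -β) (nhds (0:ℝ)) (nhds 0) := by
      simpa using continuous_neg.tendsto (0:ℝ)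
    have := (Real.continuous_exp.tendsto 0).comp h1
    rw [Real.exp_zero] at this
    exact this.mono_left nhdsWithin_le_nhds
  have hexp2 : Tendsto (fun β : ℝ => Real.exp (-(β * (((d:ℝ) - 2) / 2))))
      (nhdsWithin 0 (Set.Ioi 0)) (nhds 1) := by
    have h1 : Tendsto (fun β : ℝ => -(β * (((d:ℝ) - 2) / 2))) (nhds (0:ℝ)) (nhds 0) := by
      have hcont : Continuous fun β : ℝ => -(β * (((d:ℝ) - 2) / 2)) :=
        (continuous_id.mul continuous_const).neg
      simpa using hcont.tendsto (0:ℝ)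
    have := (Real.continuous_exp.tendsto 0).comp h1
    rw [Real.exp_zero] at this
    exact this.mono_left nhdsWithin_le_nhds
  have hfac1 : Tendsto (fun β : ℝ => Real.exp (-(β * (((d:ℝ) - 2) / 2))) * (1 + Real.exp (-β)))
      (nhdsWithin 0 (Set.Ioi 0)) (nhds 2) := by
    have := hexp2.mul ((tendsto_const_nhds (x := (1:ℝ))).add hexp)
    norm_num at this
    exact this
  have hfac2 : Tendsto (fun β : ℝ => ((1 - Real.exp (-β)) ^ (d - 1))⁻¹)
      (nhdsWithin 0 (Set.Ioi 0)) Filter.atTop := by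
    apply Filter.Tendsto.inv_tendsto_nhdsGT_zero
    rw [tendsto_nhdsWithin_iff]
    constructor
    · have hbase : Tendsto (fun β : ℝ => 1 - Real.exp (-β)) (nhdsWithin 0 (Set.Ioi 0))
          (nhds 0) := by
        have := (tendsto_const_nhds (x := (1:ℝ))).sub hexp
        norm_num at this
        exact this
      have := hbase.pow (d - 1)
      rwa [zero_pow (by omega : d - 1 ≠ 0)] at this
    · filter_upwards [self_mem_nhdsWithin] with β hβ
      have hβ0 : (0:ℝ) < β := hβ
      have hx1 : Real.exp (-β) < 1 := Real.exp_lt_one_iff.mpr (by linarith)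
      have hpos : (0:ℝ) < 1 - Real.exp (-β) := by linarith
      exact Set.mem_Ioi.mpr (pow_pos hpos _)
  exact hfac1.pos_mul_atTop (by norm_num) hfac2

lemma tendsto_u_atBot (d : ℕ) (hd : 3 ≤ d) {δ : ℝ} (hδ : δ < 0) :
    Tendsto (fun β : ℝ => Real.exp (-(β * (((d:ℝ) - 2) / 2))) * δ *
        ((1 - Real.exp (-(2 * β))) / (1 - Real.exp (-β)) ^ d))
      (nhdsWithin 0 (Set.Ioi 0)) Filter.atBot := by
  have h := tendsto_ratio_atTop d hd
  have := (tendsto_const_mul_atBot_of_neg hδ).mpr h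
  refine this.congr fun β => ?_
  ring


/-- Let `χ` be the character of a faithful finite-dimensional complex
representation of a finite group `G`, `d ≥ 3`, and let `α` be an irreducible complex
representation of `G` with character `χ_α`. The reduced partition function
`Z_α(β) = (dim α / |G|) Σ_g conj(χ_α g) Z(β, g)` satisfies
`Z_α(β)/Z(β, 1) → dim(α)²/|G|` as `β → 0⁺`. -/
theorem freeScalar_reduced_partition_limit
    {G : Type*} [Group G] [Fintype G]
    {V : Type*} [AddCommGroup V] [Module ℂ V] [FiniteDimensional ℂ V]
    (ρ : Representation ℂ G V) (hfaith : Function.Injective ρ)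
    (d : ℕ) (hd : 3 ≤ d)
    {W : Type*} [AddCommGroup W] [Module ℂ W] [FiniteDimensional ℂ W]
    (α : Representation ℂ G W)
    (hα : IsSimpleModule (MonoidAlgebra ℂ G) α.asModule) :
    Filter.Tendsto
      (fun β : ℝ =>
        (((Module.finrank ℂ W : ℂ) / (Fintype.card G : ℂ)) *
            ∑ g : G, star (LinearMap.trace ℂ W (α g)) *
              freeScalarZ (fun h => LinearMap.trace ℂ V (ρ h)) d β g) /
          freeScalarZ (fun h => LinearMap.trace ℂ V (ρ h)) d β 1)
      (nhdsWithin 0 (Set.Ioi 0))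
      (nhds ((Module.finrank ℂ W : ℂ) ^ 2 / (Fintype.card G : ℂ))) := by
  classical
  set χ : G → ℂ := fun h => LinearMap.trace ℂ V (ρ h) with hχ
  set N : ℕ := Module.finrank ℂ V with hN
  have hm : 0 < Fintype.card G := Fintype.card_pos
  have hpow1 : ∀ h : G, (ρ h) ^ (Fintype.card G) = 1 := by
    intro h; rw [← map_pow, pow_card_eq_one, map_one]
  have habs : ∀ h : G, |(χ h).re| ≤ (N:ℝ) := fun h => (end_trace_re hm (ρ h) (hpow1 h)).1
  have hle : ∀ h : G, (χ h).re ≤ (N:ℝ) := fun h => (abs_le.mp (habs h)).2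
  have hχ1re : (χ 1).re = (N:ℝ) := by
    have h1 : χ 1 = (N : ℂ) := by
      rw [hχ]
      simp only [map_one]
      rw [LinearMap.trace_one]
    rw [h1, Complex.natCast_re]
  have hlt : ∀ h : G, h ≠ 1 → (χ h).re < (N:ℝ) := by
    intro h hne
    rcases lt_or_eq_of_le (hle h) with h' | h'
    · exact h'
    · exfalso
      have heq1 := (end_trace_re hm (ρ h) (hpow1 h)).2 h'
      exact hne (hfaith (by rw [heq1, map_one]))
  have hfun : ∀ β : ℝ,
      ((((Module.finrank ℂ W : ℂ) / (Fintype.card G : ℂ)) *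
          ∑ g : G, star (LinearMap.trace ℂ W (α g)) * freeScalarZ χ d β g) /
        freeScalarZ χ d β 1)
      = ((Module.finrank ℂ W : ℂ) / (Fintype.card G : ℂ)) *
          ∑ g : G, star (LinearMap.trace ℂ W (α g)) *
            ((Real.exp ((∑' n, fsRealTerm χ d β g n) - ∑' n, fsRealTerm χ d β 1 n) : ℝ) : ℂ) := by
    intro β
    rw [mul_div_assoc, Finset.sum_div]
    congr 1
    apply Finset.sum_congr rfl
    intro g _
    rw [fsZ_eq, fsZ_eq, Real.exp_sub, Complex.ofReal_div, mul_div_assoc]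
  simp only [hfun]
  have hsum : Filter.Tendsto
      (fun β : ℝ => ∑ g : G, star (LinearMap.trace ℂ W (α g)) *
        ((Real.exp ((∑' n, fsRealTerm χ d β g n) - ∑' n, fsRealTerm χ d β 1 n) : ℝ) : ℂ))
      (nhdsWithin 0 (Set.Ioi 0))
      (nhds (∑ g : G, if g = 1 then star (LinearMap.trace ℂ W (α g)) else 0)) := by
    apply tendsto_finset_sum
    intro g _
    by_cases hg : g = 1
    · subst hg
      rw [if_pos rfl]
      simp only [sub_self, Real.exp_zero, Complex.ofReal_one, mul_one]
      exact tendsto_const_nhds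
    · rw [if_neg hg]
      have hδ : 2 * ((χ g).re - (N:ℝ)) < 0 := by
        have := hlt g hg
        linarith
      have hub := tendsto_u_atBot d hd hδ
      have hTb : Filter.Tendsto
          (fun β : ℝ => (∑' n, fsRealTerm χ d β g n) - ∑' n, fsRealTerm χ d β 1 n)
          (nhdsWithin 0 (Set.Ioi 0)) Filter.atBot := by
        apply Filter.tendsto_atBot_mono' _ _ hub
        apply Filter.eventually_of_mem self_mem_nhdsWithin
        intro β hβ
        exact fsT_diff_le χ d hd hβ g habs hχ1re hle
      have hexp0 : Filter.Tendsto
          (fun β : ℝ => Real.exp ((∑' n, fsRealTerm χ d β g n) - ∑' n, fsRealTerm χ d β 1 n))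
          (nhdsWithin 0 (Set.Ioi 0)) (nhds 0) := Real.tendsto_exp_atBot.comp hTb
      have hexpC : Filter.Tendsto
          (fun β : ℝ =>
            ((Real.exp ((∑' n, fsRealTerm χ d β g n) - ∑' n, fsRealTerm χ d β 1 n) : ℝ) : ℂ))
          (nhdsWithin 0 (Set.Ioi 0)) (nhds 0) := by
        have := (Complex.continuous_ofReal.tendsto 0).comp hexp0
        simpa only [Function.comp_def, Complex.ofReal_zero] using this
      have := hexpC.const_mul (star (LinearMap.trace ℂ W (α g)))
      simpa using this
  have hval : (∑ g : G, if g = 1 then star (LinearMap.trace ℂ W (α g)) else 0)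
      = (Module.finrank ℂ W : ℂ) := by
    rw [Finset.sum_ite_eq' Finset.univ (1 : G)
      (fun g => star (LinearMap.trace ℂ W (α g)))]
    simp only [Finset.mem_univ, if_pos, map_one, LinearMap.trace_one]
    rw [star_natCast]
  rw [hval] at hsum
  have hfinal := hsum.const_mul ((Module.finrank ℂ W : ℂ) / (Fintype.card G : ℂ))
  have : ((Module.finrank ℂ W : ℂ) / (Fintype.card G : ℂ)) * (Module.finrank ℂ W : ℂ)
      = (Module.finrank ℂ W : ℂ) ^ 2 / (Fintype.card G : ℂ) := by ring
  rwa [this] at hfinal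
end
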